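/- Let f₁,…,fₙ: ℝ^d → ℝ each be μ-strongly convex (μ > 0), C², with H-Lipschitz Hessian, and let x⋆ be the minimizer of f = (1/n)∑ᵢ fᵢ. Given points w₁,…,wₙ ∈ ℝ^d, define H̄ = (1/n)∑ᵢ ∇²fᵢ(wᵢ) and x⁺ = H̄⁻¹[(1/n)∑ᵢ (∇²fᵢ(wᵢ)wᵢ − ∇fᵢ(wᵢ))]. Then ‖x⁺ − x⋆‖ ≤ (H/(2μ)) · (1/n)∑ᵢ ‖wᵢ − x⋆‖². -/

import Mathlib

lemma taylor_bound {E : Type*} [NormedAddCommGroup E] [NormedSpace ℝ E] [CompleteSpace E]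
    {g : E → E} (hg : ContDiff ℝ 1 g) {H : ℝ} (hH : 0 ≤ H)
    (hLip : ∀ x y, ‖fderiv ℝ g x - fderiv ℝ g y‖ ≤ H * ‖x - y‖)
    (a b : E) :
    ‖fderiv ℝ g b (b - a) - (g b - g a)‖ ≤ H / 2 * ‖b - a‖ ^ 2 := by
  set v := b - a with hv
  set A := fderiv ℝ g b with hA
  have hcont : Continuous fun t : ℝ => fderiv ℝ g (a + t • v) v :=
    Continuous.clm_apply ((hg.continuous_fderiv one_ne_zero).comp (by continuity)) continuous_const
  have hderiv : ∀ t ∈ Set.uIcc (0:ℝ) 1,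
      HasDerivAt (fun s : ℝ => g (a + s • v)) (fderiv ℝ g (a + t • v) v) t := by
    intro t _
    have h1 : HasDerivAt (fun s : ℝ => a + s • v) v t := by
      simpa using ((hasDerivAt_id t).smul_const v).const_add a
    have h2 : HasFDerivAt g (fderiv ℝ g (a + t • v)) (a + t • v) :=
      (hg.differentiable one_ne_zero (a + t • v)).hasFDerivAt
    exact h2.comp_hasDerivAt t h1
  have hint := intervalIntegral.integral_eq_sub_of_hasDerivAt hderiv
    (hcont.intervalIntegrable 0 1)
  have hab : a + (1:ℝ) • v = b := by rw [hv]; simp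
  have ha0 : a + (0:ℝ) • v = a := by simp
  rw [hab, ha0] at hint
  have key : A v - (g b - g a) = ∫ t in (0:ℝ)..1, (A v - fderiv ℝ g (a + t • v) v) := by
    rw [intervalIntegral.integral_sub intervalIntegrable_const (hcont.intervalIntegrable 0 1),
      ← hint]
    simp
  rw [key]
  have hle : ∀ t ∈ Set.uIoc (0:ℝ) 1,
      ‖A v - fderiv ℝ g (a + t • v) v‖ ≤ H * (1 - t) * ‖v‖ ^ 2 := by
    intro t ht
    rw [Set.uIoc_of_le (by norm_num)] at ht
    have h1 : A v - fderiv ℝ g (a + t • v) v = (A - fderiv ℝ g (a + t • v)) v := by simp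
    rw [h1]
    calc ‖(A - fderiv ℝ g (a + t • v)) v‖
        ≤ ‖A - fderiv ℝ g (a + t • v)‖ * ‖v‖ := (A - _).le_opNorm v
      _ ≤ (H * ‖b - (a + t • v)‖) * ‖v‖ := by
          gcongr; exact hLip b (a + t • v)
      _ = H * (1 - t) * ‖v‖ ^ 2 := by
          have heq : b - (a + t • v) = (1 - t) • v := by
            rw [hv]; module
          rw [heq, norm_smul]
          have h01 : (0:ℝ) ≤ 1 - t := by linarith [ht.2]
          rw [Real.norm_eq_abs, abs_of_nonneg h01]
          ring
  have hInt : (∫ t in (0:ℝ)..1, H * (1 - t) * ‖v‖ ^ 2) = H / 2 * ‖v‖ ^ 2 := by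
    have heq : ∀ t : ℝ, H * (1 - t) * ‖v‖ ^ 2 = H * ‖v‖ ^ 2 - H * ‖v‖ ^ 2 * t := by
      intro t; ring
    simp only [heq]
    rw [intervalIntegral.integral_sub intervalIntegrable_const
      ((by continuity : Continuous fun t:ℝ => H*‖v‖^2*t).intervalIntegrable 0 1),
      intervalIntegral.integral_const, intervalIntegral.integral_const_mul, integral_id]
    norm_num
    ring
  calc ‖∫ t in (0:ℝ)..1, (A v - fderiv ℝ g (a + t • v) v)‖
      ≤ |∫ t in (0:ℝ)..1, H * (1 - t) * ‖v‖ ^ 2| := by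
        apply intervalIntegral.norm_integral_le_abs_of_norm_le
        · exact Filter.eventually_iff_exists_mem.mpr ⟨_, MeasureTheory.self_mem_ae_restrict
            measurableSet_uIoc, hle⟩
        · apply Continuous.intervalIntegrable; continuity
    _ = H / 2 * ‖v‖ ^ 2 := by
        rw [hInt, abs_of_nonneg (by positivity)]

open scoped RealInnerProductSpace

theorem stochastic_newton_step_contraction
    (d n : ℕ) (hn : 0 < n)
    (f : Fin n → EuclideanSpace ℝ (Fin d) → ℝ)
    (μ H : ℝ) (hμ : 0 < μ) (hH : 0 ≤ H)
    (hf : ∀ i, ContDiff ℝ 2 (f i))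
    (hsc : ∀ i, ∀ x : EuclideanSpace ℝ (Fin d), ∀ v : EuclideanSpace ℝ (Fin d),
      μ * ‖v‖ ^ 2 ≤ ⟪fderiv ℝ (gradient (f i)) x v, v⟫)
    (hLip : ∀ i, ∀ x y : EuclideanSpace ℝ (Fin d),
      ‖fderiv ℝ (gradient (f i)) x - fderiv ℝ (gradient (f i)) y‖ ≤ H * ‖x - y‖)
    (xstar : EuclideanSpace ℝ (Fin d))
    (hstar : ∑ i, gradient (f i) xstar = 0)
    (w : Fin n → EuclideanSpace ℝ (Fin d))
    (xplus : EuclideanSpace ℝ (Fin d))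
    (hstep : ((n : ℝ)⁻¹ • ∑ i, fderiv ℝ (gradient (f i)) (w i)) xplus
      = (n : ℝ)⁻¹ • ∑ i, (fderiv ℝ (gradient (f i)) (w i) (w i) - gradient (f i) (w i))) :
    ‖xplus - xstar‖ ≤ H / (2 * μ) * ((n : ℝ)⁻¹ * ∑ i, ‖w i - xstar‖ ^ 2) := by
  classical
  set g : Fin n → EuclideanSpace ℝ (Fin d) → EuclideanSpace ℝ (Fin d) :=
    fun i => gradient (f i) with hg
  set A : Fin n → EuclideanSpace ℝ (Fin d) →L[ℝ] EuclideanSpace ℝ (Fin d) :=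
    fun i => fderiv ℝ (g i) (w i) with hAdef
  set u : EuclideanSpace ℝ (Fin d) := xplus - xstar with hu
  have hn' : (n : ℝ) ≠ 0 := Nat.cast_ne_zero.mpr hn.ne'
  have hg1 : ∀ i, ContDiff ℝ 1 (g i) := by
    intro i
    have h1 : ContDiff ℝ 1 (fderiv ℝ (f i)) := (hf i).fderiv_right (by norm_num)
    exact (InnerProductSpace.toDual ℝ (EuclideanSpace ℝ (Fin d))).symm.contDiff.comp h1
  have hTaylor : ∀ i, ‖A i (w i - xstar) - (g i (w i) - g i xstar)‖
      ≤ H / 2 * ‖w i - xstar‖ ^ 2 := fun i =>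
    taylor_bound (hg1 i) hH (hLip i) xstar (w i)
  set S : EuclideanSpace ℝ (Fin d) →L[ℝ] EuclideanSpace ℝ (Fin d) := ∑ i, A i with hS
  have hstep' : S xplus = ∑ i, (A i (w i) - g i (w i)) := by
    have h := congrArg (fun z : EuclideanSpace ℝ (Fin d) => (n : ℝ) • z) hstep
    simp only [ContinuousLinearMap.smul_apply, smul_smul, mul_inv_cancel₀ hn', one_smul] at h
    exact h
  have hkey : S u = ∑ i, (A i (w i - xstar) - (g i (w i) - g i xstar)) := by
    have h1 : S u = S xplus - S xstar := by rw [hu, map_sub]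
    have h2 : S xstar = ∑ i, A i xstar := by
      rw [hS]; exact ContinuousLinearMap.sum_apply _ _ _
    have h3 : (∑ i, g i xstar) = 0 := hstar
    rw [h1, hstep', h2]
    calc (∑ i, (A i (w i) - g i (w i))) - ∑ i, A i xstar
        = (∑ i, (A i (w i) - g i (w i))) - ∑ i, A i xstar + ∑ i, g i xstar := by
          rw [h3]; simp
      _ = ∑ i, (A i (w i - xstar) - (g i (w i) - g i xstar)) := by
          rw [← Finset.sum_sub_distrib, ← Finset.sum_add_distrib]
          apply Finset.sum_congr rfl
          intro i _
          rw [map_sub]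
          abel
  have hSu : ‖S u‖ ≤ ∑ i, H / 2 * ‖w i - xstar‖ ^ 2 := by
    rw [hkey]
    exact (norm_sum_le _ _).trans (Finset.sum_le_sum fun i _ => hTaylor i)
  have hscS : (n : ℝ) * (μ * ‖u‖ ^ 2) ≤ ⟪S u, u⟫ := by
    have h1 : S u = ∑ i, A i u := by rw [hS]; exact ContinuousLinearMap.sum_apply _ _ _
    rw [h1, sum_inner]
    calc (n : ℝ) * (μ * ‖u‖ ^ 2) = ∑ _i : Fin n, μ * ‖u‖ ^ 2 := by
          simp [Finset.sum_const, nsmul_eq_mul]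
      _ ≤ ∑ i, ⟪A i u, u⟫ := Finset.sum_le_sum fun i _ => hsc i (w i) u
  have hmain : (n : ℝ) * (μ * ‖u‖ ^ 2) ≤ (H / 2 * ∑ i, ‖w i - xstar‖ ^ 2) * ‖u‖ := by
    calc (n : ℝ) * (μ * ‖u‖ ^ 2) ≤ ⟪S u, u⟫ := hscS
      _ ≤ ‖S u‖ * ‖u‖ := real_inner_le_norm _ _
      _ ≤ (∑ i, H / 2 * ‖w i - xstar‖ ^ 2) * ‖u‖ :=
          mul_le_mul_of_nonneg_right hSu (norm_nonneg _)
      _ = (H / 2 * ∑ i, ‖w i - xstar‖ ^ 2) * ‖u‖ := by rw [Finset.mul_sum]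
  have hSig : (0:ℝ) ≤ ∑ i, ‖w i - xstar‖ ^ 2 :=
    Finset.sum_nonneg fun i _ => by positivity
  show ‖u‖ ≤ H / (2 * μ) * ((n : ℝ)⁻¹ * ∑ i, ‖w i - xstar‖ ^ 2)
  rcases eq_or_ne u 0 with h0 | h0
  · rw [h0, norm_zero]
    positivity
  · have hu0 : 0 < ‖u‖ := norm_pos_iff.mpr h0
    have hnpos : (0:ℝ) < n := Nat.cast_pos.mpr hn
    have h2 : (n : ℝ) * μ * ‖u‖ ≤ H / 2 * ∑ i, ‖w i - xstar‖ ^ 2 := by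
      have h3 : ((n : ℝ) * μ * ‖u‖) * ‖u‖ ≤ (H / 2 * ∑ i, ‖w i - xstar‖ ^ 2) * ‖u‖ := by
        calc ((n : ℝ) * μ * ‖u‖) * ‖u‖ = (n : ℝ) * (μ * ‖u‖ ^ 2) := by ring
          _ ≤ _ := hmain
      exact le_of_mul_le_mul_right h3 hu0
    have h4 : ‖u‖ ≤ (H / 2 * ∑ i, ‖w i - xstar‖ ^ 2) / ((n : ℝ) * μ) := by
      rw [le_div_iff₀ (by positivity)]
      calc ‖u‖ * ((n : ℝ) * μ) = (n : ℝ) * μ * ‖u‖ := by ring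
        _ ≤ _ := h2
    calc ‖u‖ ≤ (H / 2 * ∑ i, ‖w i - xstar‖ ^ 2) / ((n : ℝ) * μ) := h4
      _ = H / (2 * μ) * ((n : ℝ)⁻¹ * ∑ i, ‖w i - xstar‖ ^ 2) := by
          field_simp
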